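/- Let M be a skew-symmetric 4×4 matrix of linear forms over ℂ with vanishing Pfaffian, i.e. m_{01}·m_{23} − m_{02}·m_{13} + m_{03}·m_{12} = 0. Then there exists S ∈ GL(4,ℂ) such that S·M·Sᵀ has one of the following two forms: m_{ij} = 0 for all i,j ∈ {1,2,3} (only the first row and column may be nonzero), or m_{i3} = m_{3i} = 0 for all i (the last row and column are zero). -/

import Mathlib

open Matrix MvPolynomial

noncomputable section

/-- The polynomial ring `ℂ[x₀,…,x_{n-1}]`. -/
abbrev CPoly (n : ℕ) := MvPolynomial (Fin n) ℂ

/-- All entries of the matrix are linear forms (homogeneous of degree 1, possibly 0). -/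
def LinForms {k n : ℕ} (M : Matrix (Fin k) (Fin k) (CPoly n)) : Prop :=
  ∀ i j, (M i j).IsHomogeneous 1

/-- Skew-symmetric matrix with zero diagonal. -/
def IsSkewMat {k n : ℕ} (M : Matrix (Fin k) (Fin k) (CPoly n)) : Prop :=
  Mᵀ = -M ∧ ∀ i, M i i = 0

/-- Congruence action `M ↦ S·M·Sᵀ` of a constant matrix `S` on a matrix of polynomials. -/
def Congr {k n : ℕ} (S : Matrix (Fin k) (Fin k) ℂ) (M : Matrix (Fin k) (Fin k) (CPoly n)) :
    Matrix (Fin k) (Fin k) (CPoly n) :=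
  S.map MvPolynomial.C * M * (S.map MvPolynomial.C)ᵀ

/-- `M` has skew format `P` : some congruent matrix `S·M·Sᵀ` (with `S` invertible) has form `P`. -/
def HasFmt {k n : ℕ} (P : Matrix (Fin k) (Fin k) (CPoly n) → Prop)
    (M : Matrix (Fin k) (Fin k) (CPoly n)) : Prop :=
  ∃ S : Matrix (Fin k) (Fin k) ℂ, IsUnit S.det ∧ P (Congr S M)

/-- A `6×6` matrix built from four `3×3` blocks. -/
def blk {n : ℕ} (A B C D : Matrix (Fin 3) (Fin 3) (CPoly n)) :
    Matrix (Fin 6) (Fin 6) (CPoly n) :=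
  Matrix.reindex finSumFinEquiv finSumFinEquiv (Matrix.fromBlocks A B C D)

section Helpers

open Submodule

lemma deg_one_single {n : ℕ} (d : Fin n →₀ ℕ) (h : (∑ i ∈ d.support, d i) = 1) :
    ∃ k, d = Finsupp.single k 1 := by
  have hne : d.support.Nonempty := by
    by_contra hc
    rw [Finset.not_nonempty_iff_eq_empty] at hc
    simp [hc] at h
  obtain ⟨k, hk⟩ := hne
  have hdk : d k ≠ 0 := Finsupp.mem_support_iff.mp hk
  have hk1 : d k = 1 := by
    have : d k ≤ ∑ i ∈ d.support, d i := Finset.single_le_sum (fun i _ => Nat.zero_le _) hk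
    omega
  refine ⟨k, ?_⟩
  ext x
  rcases eq_or_ne x k with rfl | hx
  · simp [hk1]
  · rw [Finsupp.single_eq_of_ne hx]
    by_contra hc
    have hxs : x ∈ d.support := Finsupp.mem_support_iff.mpr hc
    have : d k + d x ≤ ∑ i ∈ d.support, d i := by
      have : ({k, x} : Finset (Fin n)) ⊆ d.support := by
        intro y hy; simp at hy; rcases hy with rfl | rfl <;> assumption
      calc d k + d x = ∑ i ∈ {k, x}, d i := by rw [Finset.sum_pair (Ne.symm hx)]
        _ ≤ _ := Finset.sum_le_sum_of_subset this
    omega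

lemma lin_rep {n : ℕ} (P : MvPolynomial (Fin n) ℂ) (h : P.IsHomogeneous 1) :
    P = ∑ k : Fin n, C (coeff (Finsupp.single k 1) P) * X k := by
  ext d
  rw [coeff_sum]
  simp only [coeff_C_mul, coeff_X']
  by_cases hd : ∃ k, d = Finsupp.single k 1
  · obtain ⟨k0, rfl⟩ := hd
    rw [Finset.sum_eq_single k0]
    · simp
    · intro b _ hb
      rw [if_neg, mul_zero]
      exact fun hc => hb ((Finsupp.single_left_inj one_ne_zero).mp hc)
    · intro hc; exact absurd (Finset.mem_univ k0) hc
  · have hL : coeff d P = 0 := by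
      by_contra hc
      have hw := h hc
      rw [show (Finsupp.weight 1 : (Fin n →₀ ℕ) →+ ℕ) = Finsupp.degree from Finsupp.degree_eq_weight_one.symm] at hw
      exact hd (deg_one_single d hw)
    rw [hL, Finset.sum_eq_zero]
    intro k _
    rw [if_neg (fun hc => hd ⟨k, hc.symm⟩), mul_zero]

lemma eval_lin {n : ℕ} (P : MvPolynomial (Fin n) ℂ) (h : P.IsHomogeneous 1) (t : Fin n → ℂ) :
    eval t P = ∑ k : Fin n, coeff (Finsupp.single k 1) P * t k := by
  conv_lhs => rw [lin_rep P h]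
  simp [eval_sum]

lemma eval_add_lin {n : ℕ} (P : MvPolynomial (Fin n) ℂ) (h : P.IsHomogeneous 1) (s t : Fin n → ℂ) :
    eval (s + t) P = eval s P + eval t P := by
  simp only [eval_lin P h, Pi.add_apply, mul_add, Finset.sum_add_distrib]

lemma exists_invertible_col (v : Fin 4 → ℂ) (hv : v ≠ 0) (m : Fin 4) :
    ∃ T : Matrix (Fin 4) (Fin 4) ℂ, IsUnit T.det ∧ (∀ i, T i m = v i) := by
  have hs : LinearIndepOn ℂ id ({v} : Set (Fin 4 → ℂ)) :=
    LinearIndepOn.singleton hv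
  let b := Module.Basis.extend hs
  have : FiniteDimensional ℂ (Fin 4 → ℂ) := inferInstance
  haveI : Fintype (hs.extend (Set.subset_univ _)) := FiniteDimensional.fintypeBasisIndex b
  let e : (hs.extend (Set.subset_univ _)) ≃ Fin 4 := b.indexEquiv (Pi.basisFun ℂ (Fin 4))
  have hvmem : v ∈ hs.extend (Set.subset_univ ({v} : Set (Fin 4 → ℂ))) :=
    hs.subset_extend _ rfl
  let k : Fin 4 := e ⟨v, hvmem⟩
  let b' : Module.Basis (Fin 4) ℂ (Fin 4 → ℂ) := b.reindex (e.trans (Equiv.swap k m))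
  have hb'm : b' m = v := by
    simp only [b', Module.Basis.reindex_apply, Equiv.symm_trans_apply, Equiv.symm_swap,
      Equiv.swap_apply_right]
    show b (e.symm k) = v
    simp only [k, Equiv.symm_apply_apply]
    exact Module.Basis.extend_apply_self hs _
  refine ⟨(Pi.basisFun ℂ (Fin 4)).toMatrix b', ?_, ?_⟩
  · haveI := (Pi.basisFun ℂ (Fin 4)).invertibleToMatrix b'
    exact Matrix.isUnit_det_of_invertible _
  · intro i
    rw [Module.Basis.toMatrix_apply, hb'm, Pi.basisFun_repr]

lemma mulVec_single_one (T : Matrix (Fin 4) (Fin 4) ℂ) (m : Fin 4) :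
    T.mulVec (Pi.single m 1) = fun i => T i m := by
  funext i
  simp [Matrix.mulVec, dotProduct, Pi.single_apply, Finset.sum_ite_eq']

set_option maxHeartbeats 4000000 in
lemma pluecker (A : Matrix (Fin 4) (Fin 4) ℂ)
    (hs : ∀ i j, A j i = -A i j)
    (hp : A 0 1 * A 2 3 - A 0 2 * A 1 3 + A 0 3 * A 1 2 = 0) :
    ∀ i j k l, A i j * A k l = A i k * A j l - A i l * A j k := by
  have hd : ∀ i, A i i = 0 := fun i => by linear_combination hs i i / 2
  have e0 : (⟨0, by norm_num⟩ : Fin 4) = 0 := rfl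
  have e1 : (⟨1, by norm_num⟩ : Fin 4) = 1 := rfl
  have e2 : (⟨2, by norm_num⟩ : Fin 4) = 2 := rfl
  have e3 : (⟨3, by norm_num⟩ : Fin 4) = 3 := rfl
  intro i j k l
  fin_cases i <;> fin_cases j <;> fin_cases k <;> fin_cases l <;>
    (try simp only [e0, e1, e2, e3, hs 0 1, hs 0 2, hs 0 3, hs 1 2, hs 1 3, hs 2 3, hd]) <;>
    first
      | ring1
      | linear_combination hp
      | linear_combination -hp

/-- The elementary skew matrix `v ∧ w`. -/
def vww (v w : Fin 4 → ℂ) : Matrix (Fin 4) (Fin 4) ℂ :=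
  Matrix.of fun a b => v a * w b - w a * v b

lemma vww_smul_left (a : ℂ) (w : Fin 4 → ℂ) : vww (a • w) w = 0 := by
  ext i j; simp [vww]; ring

lemma sum0_of_indep {v w : Fin 4 → ℂ} (h : LinearIndependent ℂ ![v, w]) {a b : ℂ}
    (hab : a • v + b • w = 0) : a = 0 ∧ b = 0 := by
  have := Fintype.linearIndependent_iff.mp h ![a, b] (by
    rw [Fin.sum_univ_two]; simpa using hab)
  exact ⟨this 0, this 1⟩

lemma indep_of_vww_ne {A : Matrix (Fin 4) (Fin 4) ℂ} {v w : Fin 4 → ℂ}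
    (hA : A = vww v w) (hne : A ≠ 0) : LinearIndependent ℂ ![v, w] := by
  rw [linearIndependent_fin2]
  constructor
  · simp only [Matrix.cons_val_one, Matrix.head_cons]
    rintro rfl
    apply hne
    ext i j; simp [hA, vww]
  · intro a hc
    simp only [Matrix.cons_val_one, Matrix.head_cons, Matrix.cons_val_zero] at hc
    apply hne
    rw [hA, ← hc, vww_smul_left]

lemma decompose {A : Matrix (Fin 4) (Fin 4) ℂ}
    (hs : ∀ i j, A j i = -A i j)
    (hp : A 0 1 * A 2 3 - A 0 2 * A 1 3 + A 0 3 * A 1 2 = 0)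
    (hne : A ≠ 0) :
    ∃ v w, LinearIndependent ℂ ![v, w] ∧ A = vww v w := by
  have hex : ∃ k l, A k l ≠ 0 := by
    by_contra hc
    push_neg at hc
    exact hne (by ext i j; simp [hc])
  obtain ⟨k, l, hkl⟩ := hex
  set v : Fin 4 → ℂ := fun i => A i k with hv
  set w : Fin 4 → ℂ := fun j => (A k l)⁻¹ * A j l with hw
  have hA : A = vww v w := by
    ext i j
    have hP := pluecker A hs hp i j k l
    show A i j = A i k * ((A k l)⁻¹ * A j l) - (A k l)⁻¹ * A i l * A j k
    field_simp
    linear_combination hP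
  exact ⟨v, w, indep_of_vww_ne hA hne, hA⟩

lemma rep_change {v w p : Fin 4 → ℂ} (hp : p ≠ 0) (hmem : p ∈ span ℂ ({v, w} : Set (Fin 4 → ℂ))) :
    ∃ u, vww v w = vww p u := by
  obtain ⟨a, b, hab⟩ := mem_span_pair.mp hmem
  rcases eq_or_ne a 0 with rfl | ha
  · have hb : b ≠ 0 := by
      rintro rfl
      exact hp (by simpa using hab.symm)
    refine ⟨(-b⁻¹) • v, ?_⟩
    ext i j
    have hpw : ∀ x, p x = b * w x := fun x => by
      have := congr_fun hab x; simpa using this.symm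
    show v i * w j - w i * v j = p i * ((-b⁻¹) * v j) - (-b⁻¹) * v i * p j
    rw [hpw i, hpw j]
    field_simp
    ring
  · refine ⟨a⁻¹ • w, ?_⟩
    ext i j
    have hpv : ∀ x, p x = a * v x + b * w x := fun x => by
      have := congr_fun hab x; simpa using this.symm
    show v i * w j - w i * v j = p i * (a⁻¹ * w j) - a⁻¹ * w i * p j
    rw [hpv i, hpv j]
    field_simp
    ring

lemma range_pair (v w : Fin 4 → ℂ) : Set.range ![v, w] = {v, w} := by
  ext x
  simp [Fin.exists_fin_two, or_comm]

lemma finrank_span_pair' {v w : Fin 4 → ℂ} (h : LinearIndependent ℂ ![v, w]) :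
    Module.finrank ℂ (span ℂ ({v, w} : Set (Fin 4 → ℂ))) = 2 := by
  rw [← range_pair v w, finrank_span_eq_card h]
  simp

lemma span_pair_le {v w : Fin 4 → ℂ} {W : Submodule ℂ (Fin 4 → ℂ)}
    (hv : v ∈ W) (hw : w ∈ W) : span ℂ ({v, w} : Set (Fin 4 → ℂ)) ≤ W := by
  rw [span_le]
  intro z hz
  rcases hz with rfl | hz
  · exact hv
  · rw [Set.mem_singleton_iff] at hz; subst hz; exact hw

lemma span_eq_of_indep_mem {v w x1 x2 : Fin 4 → ℂ} (h : LinearIndependent ℂ ![v, w])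
    (hx1 : x1 ∈ span ℂ ({v, w} : Set (Fin 4 → ℂ)))
    (hx2 : x2 ∈ span ℂ ({v, w} : Set (Fin 4 → ℂ)))
    (hind : LinearIndependent ℂ ![x1, x2]) :
    span ℂ ({v, w} : Set (Fin 4 → ℂ)) = span ℂ ({x1, x2} : Set (Fin 4 → ℂ)) := by
  refine (Submodule.eq_of_le_of_finrank_le (span_pair_le hx1 hx2) ?_).symm
  rw [finrank_span_pair' h, finrank_span_pair' hind]

/-- Two skew matrices `v∧w`, `v'∧w'` with vanishing pairing have intersecting lines. -/
lemma meet {v w v' w' : Fin 4 → ℂ} (h1 : LinearIndependent ℂ ![v, w])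
    (h2 : LinearIndependent ℂ ![v', w'])
    (hB : vww v w 0 1 * vww v' w' 2 3 - vww v w 0 2 * vww v' w' 1 3
        + vww v w 0 3 * vww v' w' 1 2 + vww v' w' 0 1 * vww v w 2 3
        - vww v' w' 0 2 * vww v w 1 3 + vww v' w' 0 3 * vww v w 1 2 = 0) :
    ∃ x : Fin 4 → ℂ, x ≠ 0 ∧ x ∈ span ℂ ({v, w} : Set (Fin 4 → ℂ)) ∧
      x ∈ span ℂ ({v', w'} : Set (Fin 4 → ℂ)) := by
  have hdet : (Matrix.of ![v, w, v', w']).det = 0 := by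
    simp only [vww, Matrix.of_apply] at hB
    simp [Matrix.det_succ_row_zero, Fin.sum_univ_succ,
      show (Fin.succ 2 : Fin 4) = 3 by decide,
      show ((2 : Fin 4).succAbove 2 : Fin 4) = 3 by decide,
      show ((1 : Fin 4).succAbove 2 : Fin 4) = 3 by decide,
      show ((0 : Fin 4).succAbove 2 : Fin 4) = 3 by decide,
      show ((3 : Fin 4).succAbove 2 : Fin 4) = 2 by decide,
      show (Fin.castSucc 2 : Fin 4) = 2 by decide]
    first
      | linear_combination hB
      | linear_combination -hB
  obtain ⟨c, hc0, hc⟩ := Matrix.exists_vecMul_eq_zero_iff.mpr hdet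
  have hcomb : ∀ j, c 0 * v j + c 1 * w j + c 2 * v' j + c 3 * w' j = 0 := by
    intro j
    have := congr_fun hc j
    simpa [Matrix.vecMul, dotProduct, Fin.sum_univ_four, Matrix.of_apply] using this
  by_cases h01 : c 0 = 0 ∧ c 1 = 0
  · exfalso
    have : c 2 • v' + c 3 • w' = 0 := by
      funext j
      have := hcomb j
      simp [h01.1, h01.2] at this
      simpa using this
    obtain ⟨h2', h3'⟩ := sum0_of_indep h2 this
    apply hc0
    funext i
    fin_cases i <;> simp [h01.1, h01.2, h2', h3']
  · refine ⟨c 0 • v + c 1 • w, ?_, ?_, ?_⟩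
    · intro hx
      obtain ⟨ha, hb⟩ := sum0_of_indep h1 hx
      exact h01 ⟨ha, hb⟩
    · exact mem_span_pair.mpr ⟨c 0, c 1, rfl⟩
    · refine mem_span_pair.mpr ⟨-c 2, -c 3, ?_⟩
      funext j
      simp only [Pi.add_apply, Pi.smul_apply, smul_eq_mul, neg_mul]
      linear_combination -hcomb j

-- element of span pair: v
lemma mem_left {v w : Fin 4 → ℂ} : v ∈ span ℂ ({v, w} : Set (Fin 4 → ℂ)) :=
  subset_span (Set.mem_insert _ _)
lemma mem_right {v w : Fin 4 → ℂ} : w ∈ span ℂ ({v, w} : Set (Fin 4 → ℂ)) :=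
  subset_span (Set.mem_insert_of_mem _ rfl)

/-- intersection of two distinct lines is contained in the span of any common nonzero pt -/
lemma inf_eq_span {v1 w1 v2 w2 p : Fin 4 → ℂ} (h1 : LinearIndependent ℂ ![v1, w1])
    (hv1 : v1 ∉ span ℂ ({v2, w2} : Set (Fin 4 → ℂ))) (hp : p ≠ 0)
    (hpm : p ∈ span ℂ ({v1, w1} : Set (Fin 4 → ℂ)) ⊓ span ℂ ({v2, w2} : Set (Fin 4 → ℂ))) :
    span ℂ ({v1, w1} : Set (Fin 4 → ℂ)) ⊓ span ℂ ({v2, w2} : Set (Fin 4 → ℂ))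
      = span ℂ ({p} : Set (Fin 4 → ℂ)) := by
  set I := span ℂ ({v1, w1} : Set (Fin 4 → ℂ)) ⊓ span ℂ ({v2, w2} : Set (Fin 4 → ℂ)) with hI
  have hlt : I < span ℂ ({v1, w1} : Set (Fin 4 → ℂ)) := by
    refine lt_of_le_of_ne inf_le_left (fun he => hv1 ?_)
    have : v1 ∈ I := he ▸ mem_left
    exact this.2
  have hfr : Module.finrank ℂ I < 2 := by
    have := Submodule.finrank_lt_finrank_of_lt hlt
    rwa [finrank_span_pair' h1] at this
  refine (Submodule.eq_of_le_of_finrank_le ?_ ?_).symm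
  · rw [span_le, Set.singleton_subset_iff]; exact hpm
  · rw [finrank_span_singleton hp]; omega

theorem key (V : Set (Matrix (Fin 4) (Fin 4) ℂ))
    (hsk : ∀ A ∈ V, ∀ i j, A j i = -A i j)
    (hp : ∀ A ∈ V, A 0 1 * A 2 3 - A 0 2 * A 1 3 + A 0 3 * A 1 2 = 0)
    (hadd : ∀ A ∈ V, ∀ B ∈ V, A + B ∈ V) :
    (∃ p : Fin 4 → ℂ, p ≠ 0 ∧ ∀ A ∈ V, ∃ u, A = vww p u) ∨
    (∃ φ : Fin 4 → ℂ, φ ≠ 0 ∧ ∀ A ∈ V, ∀ b, ∑ a, φ a * A a b = 0) := by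
  classical
  -- pairwise pairing vanishes
  have hB : ∀ A ∈ V, ∀ B ∈ V,
      A 0 1 * B 2 3 - A 0 2 * B 1 3 + A 0 3 * B 1 2
      + B 0 1 * A 2 3 - B 0 2 * A 1 3 + B 0 3 * A 1 2 = 0 := by
    intro A hA B hBm
    have h3 := hp (A + B) (hadd A hA B hBm)
    simp only [Matrix.add_apply] at h3
    linear_combination h3 - hp A hA - hp B hBm
  have hdec : ∀ A ∈ V, A ≠ 0 → ∃ v w, LinearIndependent ℂ ![v, w] ∧ A = vww v w :=
    fun A hA hne => decompose (hsk A hA) (hp A hA) hne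
  have meetV : ∀ A ∈ V, ∀ A' ∈ V, ∀ {v w v' w' : Fin 4 → ℂ},
      LinearIndependent ℂ ![v, w] → LinearIndependent ℂ ![v', w'] →
      A = vww v w → A' = vww v' w' →
      ∃ x : Fin 4 → ℂ, x ≠ 0 ∧ x ∈ span ℂ ({v, w} : Set (Fin 4 → ℂ)) ∧
        x ∈ span ℂ ({v', w'} : Set (Fin 4 → ℂ)) := by
    intro A hA A' hA' v w v' w' h1 h2 r1 r2
    apply meet h1 h2
    have := hB A hA A' hA'
    rw [r1, r2] at this
    linear_combination this
  by_cases hallz : ∀ A ∈ V, A = 0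
  · left
    refine ⟨Pi.single 0 1, by simp [Pi.single_eq_same, Function.ne_iff], ?_⟩
    intro A hA
    exact ⟨0, by rw [hallz A hA]; ext i j; simp [vww]⟩
  push_neg at hallz
  obtain ⟨A1, hA1V, hA1⟩ := hallz
  obtain ⟨v1, w1, hind1, hrep1⟩ := hdec A1 hA1V hA1
  by_cases hα1 : ∀ A ∈ V, ∃ u, A = vww v1 u
  · left
    refine ⟨v1, ?_, hα1⟩
    intro hz
    rw [linearIndependent_fin2] at hind1
    exact hind1.2 0 (by simp [hz])
  push_neg at hα1
  obtain ⟨A2, hA2V, hA2⟩ := hα1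
  have hA2ne : A2 ≠ 0 := by
    rintro rfl
    exact hA2 0 (by ext i j; simp [vww])
  obtain ⟨v2, w2, hind2, hrep2⟩ := hdec A2 hA2V hA2ne
  have hv1ne : v1 ≠ 0 := by
    intro hz
    rw [linearIndependent_fin2] at hind1
    exact hind1.2 0 (by simp [hz])
  have hv1nm : v1 ∉ span ℂ ({v2, w2} : Set (Fin 4 → ℂ)) := by
    intro hmem
    obtain ⟨u, hu⟩ := rep_change hv1ne hmem
    exact hA2 u (hrep2.trans hu)
  -- the intersection point p
  obtain ⟨p, hpne, hp1, hp2⟩ := meetV A1 hA1V A2 hA2V hind1 hind2 hrep1 hrep2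
  have hinfp := inf_eq_span hind1 hv1nm hpne ⟨hp1, hp2⟩
  by_cases hα2 : ∀ A ∈ V, ∃ u, A = vww p u
  · left
    exact ⟨p, hpne, hα2⟩
  push_neg at hα2
  obtain ⟨A3, hA3V, hA3⟩ := hα2
  have hA3ne : A3 ≠ 0 := by
    rintro rfl
    exact hA3 0 (by ext i j; simp [vww])
  obtain ⟨v3, w3, hind3, hrep3⟩ := hdec A3 hA3V hA3ne
  have hpnm3 : p ∉ span ℂ ({v3, w3} : Set (Fin 4 → ℂ)) := by
    intro hmem
    obtain ⟨u, hu⟩ := rep_change hpne hmem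
    exact hA3 u (hrep3.trans hu)
  -- the hyperplane W
  set W := span ℂ ({v1, w1} : Set (Fin 4 → ℂ)) ⊔ span ℂ ({v2, w2} : Set (Fin 4 → ℂ)) with hWdef
  have hL1W : span ℂ ({v1, w1} : Set (Fin 4 → ℂ)) ≤ W := le_sup_left
  have hL2W : span ℂ ({v2, w2} : Set (Fin 4 → ℂ)) ≤ W := le_sup_right
  have hpW : p ∈ W := hL1W hp1
  -- key sub-step : a line of V that does not contain p lies in W
  have hsub : ∀ A ∈ V, ∀ {v w : Fin 4 → ℂ}, LinearIndependent ℂ ![v, w] → A = vww v w →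
      p ∉ span ℂ ({v, w} : Set (Fin 4 → ℂ)) → span ℂ ({v, w} : Set (Fin 4 → ℂ)) ≤ W := by
    intro A hAV v w hind hrep hpnm
    obtain ⟨x1, hx1ne, hx1L, hx1L1⟩ := meetV A hAV A1 hA1V hind hind1 hrep hrep1
    obtain ⟨x2, hx2ne, hx2L, hx2L2⟩ := meetV A hAV A2 hA2V hind hind2 hrep hrep2
    by_cases hdep : x2 ∈ span ℂ ({x1} : Set (Fin 4 → ℂ))
    · -- then x1 ∈ L1 ⊓ L2 = span p, so p ∈ L, contradiction
      exfalso
      obtain ⟨c, hc⟩ := mem_span_singleton.mp hdep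
      have hcne : c ≠ 0 := by rintro rfl; simp at hc; exact hx2ne hc.symm
      have hx1L2 : x1 ∈ span ℂ ({v2, w2} : Set (Fin 4 → ℂ)) := by
        have : x1 = c⁻¹ • x2 := by rw [← hc, smul_smul, inv_mul_cancel₀ hcne, one_smul]
        rw [this]; exact smul_mem _ _ hx2L2
      have hx1inf : x1 ∈ span ℂ ({p} : Set (Fin 4 → ℂ)) := by
        rw [← hinfp]; exact ⟨hx1L1, hx1L2⟩
      obtain ⟨d, hd⟩ := mem_span_singleton.mp hx1inf
      have hdne : d ≠ 0 := by rintro rfl; simp at hd; exact hx1ne hd.symm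
      apply hpnm
      have : p = d⁻¹ • x1 := by rw [← hd, smul_smul, inv_mul_cancel₀ hdne, one_smul]
      rw [this]; exact smul_mem _ _ hx1L
    · -- x1 x2 independent, L = span {x1, x2} ≤ W
      have hind12 : LinearIndependent ℂ ![x1, x2] := by
        rw [linearIndependent_fin2]
        refine ⟨by simpa using hx2ne, ?_⟩
        intro a hc
        simp only [Matrix.cons_val_one, Matrix.head_cons, Matrix.cons_val_zero] at hc
        rcases eq_or_ne a 0 with rfl | ha
        · rw [zero_smul] at hc; exact hx1ne hc.symm
        · apply hdep
          rw [mem_span_singleton]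
          exact ⟨a⁻¹, by rw [← hc, smul_smul, inv_mul_cancel₀ ha, one_smul]⟩
      have := span_eq_of_indep_mem hind hx1L hx2L hind12
      rw [this]
      exact span_pair_le (hL1W hx1L1) (hL2W hx2L2)
  have hL3W : span ℂ ({v3, w3} : Set (Fin 4 → ℂ)) ≤ W := hsub A3 hA3V hind3 hrep3 hpnm3
  -- every line of V lies in W
  have hall : ∀ A ∈ V, ∀ {v w : Fin 4 → ℂ}, LinearIndependent ℂ ![v, w] → A = vww v w →
      span ℂ ({v, w} : Set (Fin 4 → ℂ)) ≤ W := by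
    intro A hAV v w hind hrep
    by_cases hpm : p ∈ span ℂ ({v, w} : Set (Fin 4 → ℂ))
    · obtain ⟨x3, hx3ne, hx3L, hx3L3⟩ := meetV A hAV A3 hA3V hind hind3 hrep hrep3
      have hx3np : x3 ∉ span ℂ ({p} : Set (Fin 4 → ℂ)) := by
        intro hmem
        obtain ⟨c, hc⟩ := mem_span_singleton.mp hmem
        have hcne : c ≠ 0 := by rintro rfl; simp at hc; exact hx3ne hc.symm
        apply hpnm3
        have : p = c⁻¹ • x3 := by rw [← hc, smul_smul, inv_mul_cancel₀ hcne, one_smul]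
        rw [this]; exact smul_mem _ _ hx3L3
      have hindpx : LinearIndependent ℂ ![p, x3] := by
        rw [linearIndependent_fin2]
        refine ⟨by simpa using hx3ne, ?_⟩
        intro a hc
        simp only [Matrix.cons_val_one, Matrix.head_cons, Matrix.cons_val_zero] at hc
        rcases eq_or_ne a 0 with rfl | ha
        · rw [zero_smul] at hc; exact hpne hc.symm
        · apply hx3np
          rw [mem_span_singleton]
          exact ⟨a⁻¹, by rw [← hc, smul_smul, inv_mul_cancel₀ ha, one_smul]⟩
      have := span_eq_of_indep_mem hind hpm hx3L hindpx
      rw [this]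
      exact span_pair_le hpW (hL3W hx3L3)
    · exact hsub A hAV hind hrep hpm
  -- W is a proper subspace
  have hfrW : Module.finrank ℂ W ≤ 3 := by
    have hsum := Submodule.finrank_sup_add_finrank_inf_eq
      (span ℂ ({v1, w1} : Set (Fin 4 → ℂ))) (span ℂ ({v2, w2} : Set (Fin 4 → ℂ)))
    rw [finrank_span_pair' hind1, finrank_span_pair' hind2, hinfp,
      finrank_span_singleton hpne] at hsum
    rw [hWdef]
    omega
  have hWne : W ≠ ⊤ := by
    intro he
    have h4 : Module.finrank ℂ W = 4 := by
      rw [he, finrank_top]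
      simp [Module.finrank_pi]
    omega
  obtain ⟨u, hu⟩ : ∃ u, u ∉ W := by
    by_contra hc
    push_neg at hc
    exact hWne (Submodule.eq_top_iff'.mpr hc)
  -- a functional vanishing on W
  have hmkne : W.mkQ u ≠ 0 := by
    rw [Submodule.mkQ_apply, ne_eq, Submodule.Quotient.mk_eq_zero]
    exact hu
  obtain ⟨ψ, hψ⟩ : ∃ ψ : Module.Dual ℂ ((Fin 4 → ℂ) ⧸ W), ψ (W.mkQ u) ≠ 0 := by
    by_contra hc
    push_neg at hc
    exact hmkne ((Module.forall_dual_apply_eq_zero_iff ℂ _).mp hc)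
  set φ : Module.Dual ℂ (Fin 4 → ℂ) := ψ.comp W.mkQ with hφdef
  have hφW : ∀ x ∈ W, φ x = 0 := by
    intro x hx
    simp only [hφdef, LinearMap.comp_apply, Submodule.mkQ_apply]
    rw [(Submodule.Quotient.mk_eq_zero W).mpr hx, map_zero]
  have hφu : φ u ≠ 0 := hψ
  set φv : Fin 4 → ℂ := fun a => φ (Pi.single a 1) with hφv
  have hφrep : ∀ x : Fin 4 → ℂ, (∑ a, φv a * x a) = φ x := by
    intro x
    have hx : x = ∑ a, x a • (Pi.single a 1 : Fin 4 → ℂ) := by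
      funext j
      simp [Finset.sum_apply, Pi.single_apply, Finset.sum_ite_eq]
    conv_rhs => rw [hx]
    rw [map_sum]
    apply Finset.sum_congr rfl
    intro a _
    rw [_root_.map_smul]
    simp [hφv, mul_comm]
  right
  refine ⟨φv, ?_, ?_⟩
  · intro hz
    apply hφu
    rw [← hφrep u, hz]
    simp
  · intro A hAV b
    rcases eq_or_ne A 0 with rfl | hAne
    · simp
    obtain ⟨v, w, hind, hrep⟩ := hdec A hAV hAne
    have hLW := hall A hAV hind hrep
    have hv0 : φ v = 0 := hφW v (hLW mem_left)
    have hw0 : φ w = 0 := hφW w (hLW mem_right)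
    have : ∀ a, φv a * A a b = (φv a * v a) * w b - (φv a * w a) * v b := by
      intro a
      rw [hrep]
      show φv a * (v a * w b - w a * v b) = _
      ring
    rw [Finset.sum_congr rfl (fun a _ => this a), Finset.sum_sub_distrib,
      ← Finset.sum_mul, ← Finset.sum_mul, hφrep v, hφrep w, hv0, hw0]
    ring

lemma congr_apply {n : ℕ} (S : Matrix (Fin 4) (Fin 4) ℂ) (M : Matrix (Fin 4) (Fin 4) (CPoly n))
    (i j : Fin 4) :
    Congr S M i j = ∑ b, (∑ a, C (S i a) * M a b) * C (S j b) := by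
  simp [Congr, Matrix.mul_apply, Matrix.map_apply]

lemma congr_skew {n : ℕ} (S : Matrix (Fin 4) (Fin 4) ℂ) (M : Matrix (Fin 4) (Fin 4) (CPoly n))
    (hsk : Mᵀ = -M) (i j : Fin 4) : Congr S M j i = -(Congr S M i j) := by
  have h : (Congr S M)ᵀ = -(Congr S M) := by
    unfold Congr
    rw [Matrix.transpose_mul, Matrix.transpose_mul, Matrix.transpose_transpose, hsk,
      Matrix.neg_mul, Matrix.mul_neg, Matrix.mul_assoc]
  have := congr_fun (congr_fun h i) j
  simpa [Matrix.transpose_apply] using this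

lemma smul_trick {R : Type*} [CommRing R] (s s' p' L : Fin 4 → R)
    (hi : ∑ a, s a * p' a = 0) (hj : ∑ b, s' b * p' b = 0) :
    ∑ b, (∑ a, s a * (p' a * L b - L a * p' b)) * s' b = 0 := by
  simp only [Fin.sum_univ_four] at hi hj ⊢
  linear_combination (s' 0 * L 0 + s' 1 * L 1 + s' 2 * L 2 + s' 3 * L 3) * hi
    - (s 0 * L 0 + s 1 * L 1 + s 2 * L 2 + s 3 * L 3) * hj

lemma alpha_entry {n : ℕ} (M : Matrix (Fin 4) (Fin 4) (CPoly n)) (S : Matrix (Fin 4) (Fin 4) ℂ)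
    (p : Fin 4 → ℂ) (L : Fin 4 → CPoly n)
    (hMrep : ∀ a b, M a b = C (p a) * L b - L a * C (p b)) (i j : Fin 4)
    (hi : ∑ a, S i a * p a = 0) (hj : ∑ b, S j b * p b = 0) : Congr S M i j = 0 := by
  have hCi : ∑ a, C (S i a) * C (p a) = (0 : CPoly n) := by
    simp only [← C_mul]
    rw [← map_sum, hi, map_zero]
  have hCj : ∑ b, C (S j b) * C (p b) = (0 : CPoly n) := by
    simp only [← C_mul]
    rw [← map_sum, hj, map_zero]
  rw [congr_apply]
  calc ∑ b, (∑ a, C (S i a) * M a b) * C (S j b)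
      = ∑ b, (∑ a, C (S i a) * (C (p a) * L b - L a * C (p b))) * C (S j b) := by
        refine Finset.sum_congr rfl fun b _ => ?_
        congr 1
        exact Finset.sum_congr rfl fun a _ => by rw [hMrep a b]
    _ = 0 := smul_trick _ _ _ _ hCi hCj

lemma beta_entries {n : ℕ} (M : Matrix (Fin 4) (Fin 4) (CPoly n)) (hsk : Mᵀ = -M)
    (S : Matrix (Fin 4) (Fin 4) ℂ) (φ : Fin 4 → ℂ)
    (hpoly : ∀ b, ∑ a, C (φ a) * M a b = 0) (hSrow : ∀ a, S 3 a = φ a) :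
    ∀ i, Congr S M i 3 = 0 ∧ Congr S M 3 i = 0 := by
  have h3 : ∀ i, Congr S M 3 i = 0 := by
    intro i
    rw [congr_apply]
    have : ∀ b, (∑ a, C (S 3 a) * M a b) = 0 := by
      intro b
      simp_rw [hSrow]
      exact hpoly b
    simp [this]
  exact fun i => ⟨by rw [congr_skew S M hsk 3 i, h3 i, neg_zero], h3 i⟩

end Helpers

/-- A skew-symmetric `4×4` matrix of linear forms with vanishing Pfaffian is congruent to
a matrix in which only the first row and column may be nonzero, or to one whose last row
and column are zero. -/
theorem statement14 {n : ℕ} (hn : 1 ≤ n) (M : Matrix (Fin 4) (Fin 4) (CPoly n))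
    (hlin : LinForms M) (hskew : IsSkewMat M)
    (hpf : M 0 1 * M 2 3 - M 0 2 * M 1 3 + M 0 3 * M 1 2 = 0) :
    ∃ S : Matrix (Fin 4) (Fin 4) ℂ, IsUnit S.det ∧
      ((∀ i j : Fin 4, 1 ≤ (i : ℕ) → 1 ≤ (j : ℕ) → Congr S M i j = 0) ∨
       (∀ i : Fin 4, Congr S M i 3 = 0 ∧ Congr S M 3 i = 0)) := by
  classical
  set F : (Fin n → ℂ) → Matrix (Fin 4) (Fin 4) ℂ :=
    fun t => Matrix.of fun i j => eval t (M i j) with hF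
  set V : Set (Matrix (Fin 4) (Fin 4) ℂ) := Set.range F with hV
  have hMji : ∀ i j, M j i = -(M i j) := by
    intro i j
    have := congr_fun (congr_fun hskew.1 i) j
    simpa [Matrix.transpose_apply] using this
  have hsk : ∀ A ∈ V, ∀ i j, A j i = -A i j := by
    rintro A ⟨t, rfl⟩ i j
    show eval t (M j i) = -(eval t (M i j))
    rw [hMji i j, map_neg]
  have hpV : ∀ A ∈ V, A 0 1 * A 2 3 - A 0 2 * A 1 3 + A 0 3 * A 1 2 = 0 := by
    rintro A ⟨t, rfl⟩
    have := congr_arg (eval t) hpf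
    simpa [hF] using this
  have haddV : ∀ A ∈ V, ∀ B ∈ V, A + B ∈ V := by
    rintro A ⟨s, rfl⟩ B ⟨t, rfl⟩
    refine ⟨s + t, ?_⟩
    ext i j
    show eval (s + t) (M i j) = eval s (M i j) + eval t (M i j)
    exact eval_add_lin _ (hlin i j) s t
  rcases key V hsk hpV haddV with ⟨p, hpne, hα⟩ | ⟨φ, hφne, hβ⟩
  · -- α case : only first row/column nonzero
    obtain ⟨i0, hi0⟩ : ∃ i0, p i0 ≠ 0 := Function.ne_iff.mp hpne
    have hPI : ∀ a b, C (p i0) * M a b = C (p a) * M i0 b - M i0 a * C (p b) := by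
      intro a b
      apply MvPolynomial.funext
      intro t
      obtain ⟨u, hu⟩ := hα (F t) ⟨t, rfl⟩
      have hent : ∀ x y, eval t (M x y) = p x * u y - u x * p y := by
        intro x y
        have := congr_fun (congr_fun hu x) y
        simpa [vww, hF] using this
      simp only [_root_.map_sub, _root_.map_mul, eval_C, hent]
      ring
    set L : Fin 4 → CPoly n := fun b => C ((p i0)⁻¹) * M i0 b with hL
    have hMrep : ∀ a b, M a b = C (p a) * L b - L a * C (p b) := by
      intro a b
      have h1 : C ((p i0)⁻¹) * C (p i0) = (1 : CPoly n) := by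
        rw [← C_mul, inv_mul_cancel₀ hi0, C_1]
      calc M a b = (C ((p i0)⁻¹) * C (p i0)) * M a b := by rw [h1, one_mul]
        _ = C ((p i0)⁻¹) * (C (p i0) * M a b) := by ring
        _ = C ((p i0)⁻¹) * (C (p a) * M i0 b - M i0 a * C (p b)) := by rw [hPI]
        _ = C (p a) * L b - L a * C (p b) := by rw [hL]; ring
    obtain ⟨T, hTdet, hTcol⟩ := exists_invertible_col p hpne 0
    obtain ⟨Si, hSidet, hrow⟩ : ∃ Si : Matrix (Fin 4) (Fin 4) ℂ, IsUnit Si.det ∧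
        ∀ k : Fin 4, k ≠ 0 → ∑ a, Si k a * p a = 0 := by
      refine ⟨T⁻¹, Matrix.isUnit_nonsing_inv_det T hTdet, ?_⟩
      intro k hk
      have hmv : T.mulVec (Pi.single 0 1) = p := by
        funext x
        simp [Matrix.mulVec, dotProduct, Pi.single_apply, Finset.sum_ite_eq', hTcol]
      have h2 : T⁻¹.mulVec p = Pi.single 0 1 := by
        rw [← hmv, Matrix.mulVec_mulVec, Matrix.nonsing_inv_mul T hTdet, Matrix.one_mulVec]
      have := congr_fun h2 k
      simpa [Matrix.mulVec, dotProduct, Pi.single_eq_of_ne hk] using this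
    refine ⟨Si, hSidet, Or.inl ?_⟩
    intro i j hi hj
    have hiz : i ≠ 0 := by intro h; subst h; simp at hi
    have hjz : j ≠ 0 := by intro h; subst h; simp at hj
    exact alpha_entry M Si p L hMrep i j (hrow i hiz) (hrow j hjz)
  · -- β case : last row and column zero
    have hpoly : ∀ b, ∑ a, C (φ a) * M a b = 0 := by
      intro b
      apply MvPolynomial.funext
      intro t
      rw [map_sum]
      simp only [_root_.map_mul, eval_C, map_zero]
      have := hβ (F t) ⟨t, rfl⟩ b
      simpa [hF] using this
    obtain ⟨T, hTdet, hTcol⟩ := exists_invertible_col φ hφne 3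
    refine ⟨Tᵀ, by rwa [Matrix.det_transpose], Or.inr ?_⟩
    exact beta_entries M hskew.1 Tᵀ φ hpoly (fun a => hTcol a)
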